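/- arXiv:2405.19042 — 3 statements merged into one kernel-verified Lean document; each statement's English description precedes it below -/
import Mathlib

section
/- Let C be a (d+2)-angulated category and let X := X_0 → ⋯ → X_{d+1} → Σ_d X_0 and Y := Y_0 → ⋯ → Y_{d+1} → Σ_d Y_0 be (d+2)-angles with final morphisms x_{d+1}, y_{d+1}. Then X and Y are homotopy equivalent (i.e., induce a presentation of the same C-module) if and only if Im C(-,x_{d+1}) ≅ Im C(-,y_{d+1}) in Mod C. -/
open CategoryTheory CategoryTheory.Limits

universe v u

namespace RankDAngulated

variable (C : Type u) [Category.{v} C] [Preadditive C] (d : ℕ) (e : C ≌ C)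

/-- A candidate `(d+2)`-angle: `X₀ → X₁ → ⋯ → X_{d+1} → Σ X₀`
(entries of `obj` beyond `d+1` are junk). -/
structure Candle where
  obj : ℕ → C
  map : ∀ i, obj i ⟶ obj (i + 1)
  last : obj (d + 1) ⟶ e.functor.obj (obj 0)

/-- The category of `C`-modules: additive-group-valued presheaves. -/
abbrev ModC := Cᵒᵖ ⥤ AddCommGrpCat.{v}

/-- Exactness of a two-term complex at the middle spot. -/
def ExactPair {X Y Z : ModC C} (f : X ⟶ Y) (g : Y ⟶ Z) : Prop :=
  ∃ w : f ≫ g = 0, (ShortComplex.mk f g w).Exact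

/-- Exactness of the long sequence of `C`-modules induced by a `(d+2)`-angle. -/
noncomputable def LongExact (A : Candle C d e) : Prop :=
  ExactPair C
      (preadditiveYoneda.map (e.inverse.map A.last ≫ e.unitInv.app (A.obj 0)))
      (preadditiveYoneda.map (A.map 0)) ∧
  (∀ i < d, ExactPair C (preadditiveYoneda.map (A.map i)) (preadditiveYoneda.map (A.map (i + 1)))) ∧
  ExactPair C (preadditiveYoneda.map (A.map d)) (preadditiveYoneda.map A.last)

/-- The data of a (pre-)`(d+2)`-angulated structure on `(C, Σ)`. -/
structure Angulation where
  dist : Set (Candle C d e)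
  id_mem : ∀ X : C, ∃ A ∈ dist,
    (∃ i0 : A.obj 0 ≅ X, ∃ i1 : A.obj 1 ≅ X, i0.inv ≫ A.map 0 ≫ i1.hom = 𝟙 X) ∧
    ∀ i, 2 ≤ i → i ≤ d + 1 → IsZero (A.obj i)
  complete : ∀ {X Y : C} (f : X ⟶ Y), ∃ A ∈ dist,
    ∃ i0 : A.obj 0 ≅ X, ∃ i1 : A.obj 1 ≅ Y, i0.inv ≫ A.map 0 ≫ i1.hom = f
  longExact : ∀ A ∈ dist, LongExact C d e A

section RankAxioms

/-- RM0: constancy on isomorphism classes of morphisms. -/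
def RM0 (ρ : ∀ (X Y : C), (X ⟶ Y) → ℝ) : Prop :=
  ∀ (X Y W Z : C) (f : X ⟶ Y) (g : W ⟶ Z) (ψ : X ≅ W) (φ : Y ≅ Z),
    f ≫ φ.hom = ψ.hom ≫ g → ρ X Y f = ρ W Z g

/-- RM1: additivity on direct sums of morphisms (expressed via binary bicones/biproducts). -/
def RM1 (ρ : ∀ (X Y : C), (X ⟶ Y) → ℝ) : Prop :=
  ∀ (X Y Z W : C) (f : X ⟶ Y) (g : Z ⟶ W)
    (b₁ : BinaryBicone X Z) (_ : b₁.IsBilimit) (b₂ : BinaryBicone Y W) (_ : b₂.IsBilimit),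
    ρ b₁.pt b₂.pt (b₁.fst ≫ f ≫ b₂.inl + b₁.snd ≫ g ≫ b₂.inr) = ρ X Y f + ρ Z W g

/-- RM2: `ρ f - ρ (1_Y) + ρ g = 0` for consecutive pairs in a `(d+2)`-angle
(including the wrap-around pairs obtained by rotation). -/
def RM2 (dist : Set (Candle C d e)) (ρ : ∀ (X Y : C), (X ⟶ Y) → ℝ) : Prop :=
  ∀ A ∈ dist,
    (∀ i < d, ρ _ _ (A.map i) - ρ _ _ (𝟙 (A.obj (i + 1))) + ρ _ _ (A.map (i + 1)) = 0) ∧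
    (ρ _ _ (A.map d) - ρ _ _ (𝟙 (A.obj (d + 1))) + ρ _ _ A.last = 0) ∧
    (ρ _ _ A.last - ρ _ _ (𝟙 (e.functor.obj (A.obj 0))) + ρ _ _ (-(e.functor.map (A.map 0))) = 0)

/-- RM3: invariance under the suspension. -/
def RM3 (ρ : ∀ (X Y : C), (X ⟶ Y) → ℝ) : Prop :=
  ∀ (X Y : C) (f : X ⟶ Y), ρ _ _ (e.functor.map f) = ρ X Y f

/-- A rank function on morphisms. -/
def IsRankM (dist : Set (Candle C d e)) (ρ : ∀ (X Y : C), (X ⟶ Y) → ℝ) : Prop :=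
  (∀ (X Y : C) (f : X ⟶ Y), 0 ≤ ρ X Y f) ∧ RM0 C ρ ∧ RM1 C ρ ∧ RM2 C d e dist ρ ∧ RM3 C e ρ

/-- RO0: constancy on isomorphism classes of objects. -/
def RO0 (r : C → ℝ) : Prop := ∀ (X Y : C), (X ≅ Y) → r X = r Y

/-- RO1: additivity on direct sums. -/
def RO1 (r : C → ℝ) : Prop :=
  ∀ (X Y : C) (b : BinaryBicone X Y), b.IsBilimit → r b.pt = r X + r Y

/-- RO2: the alternating sum over a `(d+2)`-angle is nonnegative. -/
def RO2 (dist : Set (Candle C d e)) (r : C → ℝ) : Prop :=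
  ∀ A ∈ dist, 0 ≤ ∑ i ∈ Finset.range (d + 2), (-1 : ℝ) ^ i * r (A.obj i)

/-- RO3: invariance under the suspension. -/
def RO3 (r : C → ℝ) : Prop := ∀ X : C, r (e.functor.obj X) = r X

/-- A rank function on objects. -/
def IsRankO (dist : Set (Candle C d e)) (r : C → ℝ) : Prop :=
  (∀ X : C, 0 ≤ r X) ∧ RO0 C r ∧ RO1 C r ∧ RO2 C d e dist r ∧ RO3 C e r

end RankAxioms

/-- A `C`-module admitting an image presentation `M ≅ Im C(-,f)`;
in an essentially small `(d+2)`-angulated category these are exactly the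
finitely presented `C`-modules. -/
noncomputable def IsImg (M : ModC C) : Prop :=
  ∃ (X Y : C) (f : X ⟶ Y), Nonempty (M ≅ image (preadditiveYoneda.map f))

/-- An additive function on `mod C`. -/
noncomputable def AddFun (α : ModC C → ℝ) : Prop :=
  (∀ M, IsImg C M → 0 ≤ α M) ∧
  (∀ M N, IsImg C M → IsImg C N → Nonempty (M ≅ N) → α M = α N) ∧
  (∀ S : ShortComplex (ModC C), S.ShortExact →
    IsImg C S.X₁ → IsImg C S.X₂ → IsImg C S.X₃ → α S.X₂ = α S.X₁ + α S.X₃)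

/-- `𝚺_d`-invariance of a function on `mod C`, where `𝚺_d M = M ∘ Σ_d⁻¹`. -/
noncomputable def SigmaInvFun (α : ModC C → ℝ) : Prop :=
  ∀ M : ModC C, IsImg C M → α (e.inverse.op ⋙ M) = α M

end RankDAngulated

namespace RankDAngulated

variable {C : Type u} [Category.{v} C] [Preadditive C] {d : ℕ} {e : C ≌ C}

/-- A `(d+2)`-angle `X` induces a presentation of the `C`-module `M` if there is a right exact
sequence `C(-,X_d) → C(-,X_{d+1}) → M` whose first map is `C(-,x_d)`. -/
noncomputable def Presents (A : Candle C d e) (M : ModC C) : Prop :=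
  ∃ p : preadditiveYoneda.obj (A.obj (d + 1)) ⟶ M,
    Epi p ∧ ExactPair C (preadditiveYoneda.map (A.map d)) p

/-- Two `(d+2)`-angles are homotopy equivalent if they induce a presentation of the same
`C`-module. -/
noncomputable def HomotopyEquivalent (A B : Candle C d e) : Prop :=
  ∃ M : ModC C, Presents A M ∧ Presents B M

/-- Post-composing the second map by a mono preserves/reflects exactness. -/
lemma exactPair_comp_mono {X Y Z Z' : ModC C} (f : X ⟶ Y) (g : Y ⟶ Z) (ι : Z ⟶ Z')
    [Mono ι] : ExactPair C f g ↔ ExactPair C f (g ≫ ι) := by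
  constructor
  · rintro ⟨w, h⟩
    refine ⟨by rw [← Category.assoc, w, zero_comp], ?_⟩
    rw [← ShortComplex.exact_iff_of_epi_of_isIso_of_mono
      (S₁ := ShortComplex.mk f g w)
      (φ := { τ₁ := 𝟙 X, τ₂ := 𝟙 Y, τ₃ := ι })]
    exact h
  · rintro ⟨w, h⟩
    have w' : f ≫ g = 0 := by
      rw [← cancel_mono ι, Category.assoc, w, zero_comp]
    refine ⟨w', ?_⟩
    rw [ShortComplex.exact_iff_of_epi_of_isIso_of_mono
      (S₂ := ShortComplex.mk f (g ≫ ι) w)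
      (φ := { τ₁ := 𝟙 X, τ₂ := 𝟙 Y, τ₃ := ι })]
    exact h

/-- Any two modules presented with the same first map are isomorphic (both are
the cokernel of `f`). -/
lemma iso_of_presentations {X Y M N : ModC C} (f : X ⟶ Y) (p : Y ⟶ M) (q : Y ⟶ N)
    (hp : Epi p) (hq : Epi q) (ep : ExactPair C f p) (eq' : ExactPair C f q) :
    Nonempty (M ≅ N) := by
  obtain ⟨w₁, h₁⟩ := ep
  obtain ⟨w₂, h₂⟩ := eq'
  have hp' : Epi (ShortComplex.mk f p w₁).g := hp
  have hq' : Epi (ShortComplex.mk f q w₂).g := hq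
  exact ⟨h₁.gIsCokernel.coconePointUniqueUpToIso h₂.gIsCokernel⟩

/-- Every distinguished `(d+2)`-angle presents the image of the Yoneda image of
its last map. -/
lemma presents_image (T : Angulation C d e) (A : Candle C d e) (hA : A ∈ T.dist) :
    Presents A (image (preadditiveYoneda.map A.last)) := by
  refine ⟨factorThruImage (preadditiveYoneda.map A.last), inferInstance, ?_⟩
  rw [exactPair_comp_mono (ι := image.ι (preadditiveYoneda.map A.last)),
    image.fac]
  exact (T.longExact A hA).2.2

/-- Two `(d+2)`-angles `X` and `Y` in a `(d+2)`-angulated category are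
homotopy equivalent if and only if `Im C(-,x_{d+1}) ≅ Im C(-,y_{d+1})` in `Mod C`. -/
theorem homotopyEquivalent_iff_image_iso
    (T : Angulation C d e) (A B : Candle C d e) (hA : A ∈ T.dist) (hB : B ∈ T.dist) :
    HomotopyEquivalent A B ↔
      Nonempty (image (preadditiveYoneda.map A.last) ≅ image (preadditiveYoneda.map B.last)) := by
  constructor
  · rintro ⟨M, ⟨p, hp, ep⟩, ⟨q, hq, eq'⟩⟩
    obtain ⟨pA, hpA, epA⟩ := presents_image T A hA
    obtain ⟨pB, hpB, epB⟩ := presents_image T B hB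
    obtain ⟨φ⟩ := iso_of_presentations _ pA p hpA hp epA ep
    obtain ⟨ψ⟩ := iso_of_presentations _ q pB hq hpB eq' epB
    exact ⟨φ ≪≫ ψ⟩
  · rintro ⟨φ⟩
    refine ⟨image (preadditiveYoneda.map A.last), presents_image T A hA, ?_⟩
    obtain ⟨pB, hpB, epB⟩ := presents_image T B hB
    refine ⟨pB ≫ φ.inv, epi_comp _ _, ?_⟩
    exact (exactPair_comp_mono _ _ φ.inv).mp epB

end RankDAngulated
end

section
/- Let d be a positive odd integer, C an essentially small (d+2)-angulated category, and ρ an assignment of nonnegative real numbers to morphisms of C satisfying axioms RM0 and RM2. If X_0 →^{x_0} X_1 → X_2 → ⋯ → X_{d+1} → Σ_d X_0 is a (d+2)-angle in C, then ρ(x_0) + ρ(Σ_d x_0) = Σ_{i=0}^{d+1} (-1)^i ρ(1_{X_{i+1}}), where X_{d+2} := Σ_d X_0. -/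
open CategoryTheory CategoryTheory.Limits

universe v u

namespace RankDAngulated

variable {C : Type u} [Category.{v} C] [Preadditive C] {d : ℕ} {e : C ≌ C}

/-- Telescoping lemma for alternating sums. -/
lemma tele_aux (a r : ℕ → ℝ) (n : ℕ) (h : ∀ i < n, a i + a (i + 1) = r i) :
    ∑ i ∈ Finset.range n, (-1 : ℝ) ^ i * r i = a 0 - (-1 : ℝ) ^ n * a n := by
  induction n with
  | zero => simp
  | succ n ih =>
    rw [Finset.sum_range_succ, ih (fun i hi => h i (Nat.lt_succ_of_lt hi)),
      ← h n (Nat.lt_succ_self n)]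
    rw [pow_succ]
    ring

/-- Let `d` be odd and `ρ` an assignment of nonnegative reals to morphisms
satisfying RM0 and RM2.  For a `(d+2)`-angle `X₀ →^{x₀} X₁ → ⋯ → X_{d+1} → Σ_d X₀`:
`ρ(x₀) + ρ(Σ_d x₀) = ∑_{i=0}^{d+1} (-1)^i ρ(1_{X_{i+1}})`, where `X_{d+2} := Σ_d X₀`. -/
theorem rank_alternating_sum (hd : Odd d)
    (T : Angulation C d e) (ρ : ∀ (X Y : C), (X ⟶ Y) → ℝ)
    (hnonneg : ∀ (X Y : C) (f : X ⟶ Y), 0 ≤ ρ X Y f)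
    (hRM0 : RM0 C ρ) (hRM2 : RM2 C d e T.dist ρ)
    (A : Candle C d e) (hA : A ∈ T.dist) :
    ρ _ _ (A.map 0) + ρ _ _ (e.functor.map (A.map 0)) =
      (∑ i ∈ Finset.range (d + 1), (-1 : ℝ) ^ i * ρ _ _ (𝟙 (A.obj (i + 1)))) +
        (-1 : ℝ) ^ (d + 1) * ρ _ _ (𝟙 (e.functor.obj (A.obj 0))) := by
  obtain ⟨h1, h2, h3⟩ := hRM2 A hA
  -- auxiliary sequences
  set a : ℕ → ℝ := fun i =>
    if i ≤ d then ρ _ _ (A.map i)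
    else if i = d + 1 then ρ _ _ A.last
    else ρ _ _ (-(e.functor.map (A.map 0))) with ha
  set r : ℕ → ℝ := fun i =>
    if i ≤ d then ρ _ _ (𝟙 (A.obj (i + 1)))
    else ρ _ _ (𝟙 (e.functor.obj (A.obj 0))) with hr
  have key : ∀ i < d + 2, a i + a (i + 1) = r i := by
    intro i hi
    rcases lt_trichotomy i d with hlt | heq | hgt
    · have h1' := h1 i hlt
      simp only [ha, hr]
      split_ifs <;> first | linarith | omega
    · subst heq
      simp only [ha, hr]
      split_ifs <;> first | linarith | omega
    · have hi1 : i = d + 1 := by omega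
      subst hi1
      simp only [ha, hr]
      split_ifs <;> first | linarith | omega
  have tsum := tele_aux a r (d + 2) key
  have hneg : ρ _ _ (-(e.functor.map (A.map 0))) = ρ _ _ (e.functor.map (A.map 0)) := by
    refine hRM0 _ _ _ _ _ _
      ⟨-𝟙 _, -𝟙 _, by simp, by simp⟩ (Iso.refl _) ?_
    simp
  have hsum : ∑ i ∈ Finset.range (d + 2), (-1 : ℝ) ^ i * r i =
      (∑ i ∈ Finset.range (d + 1), (-1 : ℝ) ^ i * ρ _ _ (𝟙 (A.obj (i + 1)))) +
        (-1 : ℝ) ^ (d + 1) * ρ _ _ (𝟙 (e.functor.obj (A.obj 0))) := by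
    rw [Finset.sum_range_succ]
    congr 1
    · refine Finset.sum_congr rfl fun i hi => ?_
      have : i ≤ d := by simpa [Nat.lt_succ_iff] using hi
      simp [hr, this]
    · simp [hr, Nat.not_succ_le_self]
  have ha0 : a 0 = ρ _ _ (A.map 0) := by simp [ha]
  have had2 : a (d + 2) = ρ _ _ (e.functor.map (A.map 0)) := by
    simp only [ha]
    split_ifs <;> first | omega | exact hneg
  have hpow : (-1 : ℝ) ^ (d + 2) = -1 := by
    obtain ⟨k, hk⟩ := hd
    rw [hk]
    have : 2 * k + 1 + 2 = 2 * (k + 1) + 1 := by ring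
    rw [this, pow_succ, pow_mul]
    norm_num
  rw [← hsum, tsum, ha0, had2, hpow]
  ring

end RankDAngulated
end

section
/- Let C be an essentially small (d+2)-angulated category and ρ_m a rank function on morphisms in C. Then the assignment Φ(ρ_m) : X ↦ ρ_m(1_X) is a rank function on objects in C; that is, it is constant on isomorphism classes (RO0), additive on direct sums (RO1), satisfies Σ_{i=0}^{d+1} (-1)^i Φ(ρ_m)(X_i) ≥ 0 for every (d+2)-angle X_0 → ⋯ → X_{d+1} → Σ_d X_0 (RO2), and satisfies Φ(ρ_m)(Σ_d X) = Φ(ρ_m)(X) (RO3). -/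
open CategoryTheory CategoryTheory.Limits

universe v u

namespace RankDAngulated

variable {C : Type u} [Category.{v} C] [Preadditive C] {d : ℕ} {e : C ≌ C}

/-- If `ρ_m` is a rank function on morphisms in an essentially small
`(d+2)`-angulated category `C`, then `Φ(ρ_m) : X ↦ ρ_m(1_X)` is a rank function on objects:
it satisfies RO0, RO1, RO2 and RO3. -/
theorem rankM_to_rankO
    (T : Angulation C d e) (ρ : ∀ (X Y : C), (X ⟶ Y) → ℝ)
    (hρ : IsRankM C d e T.dist ρ) :
    IsRankO C d e T.dist (fun X => ρ X X (𝟙 X)) := by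
  obtain ⟨hpos, h0, h1, h2, h3⟩ := hρ
  have hneg : ∀ (X Y : C) (f : X ⟶ Y), ρ X Y (-f) = ρ X Y f := by
    intro X Y f
    exact h0 X Y X Y (-f) f ⟨-𝟙 X, -𝟙 X, by simp, by simp⟩ (Iso.refl Y) (by simp)
  refine ⟨fun X => hpos X X (𝟙 X), ?_, ?_, ?_, ?_⟩
  · intro X Y i
    exact h0 X X Y Y (𝟙 X) (𝟙 Y) i i (by simp)
  · intro X Y b hb
    have key := h1 X X Y Y (𝟙 X) (𝟙 Y) b hb b hb
    have htot : b.fst ≫ 𝟙 X ≫ b.inl + b.snd ≫ 𝟙 Y ≫ b.inr = 𝟙 b.pt := by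
      apply BinaryFan.IsLimit.hom_ext hb.isLimit <;> simp
    rw [htot] at key
    exact key
  · intro A hA
    obtain ⟨hmid, hlastrel, hwrap⟩ := h2 A hA
    set r : ℕ → ℝ := fun i => ρ (A.obj i) (A.obj i) (𝟙 (A.obj i)) with hr
    have ha0 : ρ _ _ (-(e.functor.map (A.map 0))) = ρ _ _ (A.map 0) := by
      rw [hneg, h3]
    have hS0 : ρ _ _ (𝟙 (e.functor.obj (A.obj 0))) = r 0 := by
      have := h3 (A.obj 0) (A.obj 0) (𝟙 (A.obj 0))
      rw [CategoryTheory.Functor.map_id] at this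
      exact this
    have hr0 : r 0 = ρ _ _ (A.map 0) + ρ _ _ A.last := by
      rw [ha0, hS0] at hwrap; linarith
    -- the auxiliary sequence
    set a : ℕ → ℝ := fun i =>
      if h : i ≤ d then ρ _ _ (A.map i) else ρ _ _ A.last with haa
    have ha_le : ∀ i, i ≤ d → a i = ρ _ _ (A.map i) := by
      intro i hi; simp only [haa, dif_pos hi]
    have ha_top : a (d + 1) = ρ _ _ A.last := by
      simp only [haa, dif_neg (Nat.not_succ_le_self d)]
    have hstep : ∀ i, i ≤ d → r (i + 1) = a i + a (i + 1) := by
      intro i hi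
      rcases lt_or_eq_of_le hi with hlt | heq
      · rw [ha_le i hi, ha_le (i + 1) hlt]
        have := hmid i hlt
        simp only [hr]; linarith
      · subst heq
        rw [ha_le i le_rfl, ha_top]
        simp only [hr]; linarith
    have hsum : ∀ n, n ≤ d + 1 →
        ∑ i ∈ Finset.range (n + 1), (-1 : ℝ) ^ i * r i
          = r 0 - a 0 + (-1 : ℝ) ^ n * a n := by
      intro n hn
      induction n with
      | zero => simp
      | succ m ih =>
        rw [Finset.sum_range_succ, ih (le_of_lt hn),
          hstep m (Nat.lt_succ_iff.mp hn)]
        ring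
    have hfinal := hsum (d + 1) le_rfl
    have htop_nonneg : 0 ≤ a (d + 1) := by rw [ha_top]; exact hpos _ _ _
    have hr0' : r 0 = a 0 + a (d + 1) := by
      rw [ha_le 0 (Nat.zero_le d), ha_top]; exact hr0
    show 0 ≤ ∑ i ∈ Finset.range (d + 1 + 1), (-1 : ℝ) ^ i * r i
    rw [hfinal, hr0']
    rcases Nat.even_or_odd (d + 1) with h | h
    · rw [h.neg_one_pow]; linarith
    · rw [h.neg_one_pow]; linarith
  · intro X
    have := h3 X X (𝟙 X)
    rw [CategoryTheory.Functor.map_id] at this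
    exact this


end RankDAngulated
end
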